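/- Let D ⊆ B be Banach spaces with ‖·‖_D ≥ ‖·‖_B, let {U^{t,r}_n} (n ∈ ℕ) and {U^{t,r}} be backward propagators on B, each leaving D invariant and uniformly bounded as operators D → D by a constant C, generated respectively by families {A^n_t} and {A_t} of bounded operators D → B in the sense that d/ds U^{t,s}_n f = U^{t,s}_n A^n_s f and d/ds U^{t,s} f = U^{t,s} A_s f for f ∈ D (and the analogous backward derivative equations). Then for every g ∈ D and t ≤ r, (U^{t,r}_n − U^{t,r}) g = ∫_t^r U^{t,s}_n (A^n_s − A_s) U^{s,r} g ds, and consequently ‖(U^{t,r}_n − U^{t,r}) g‖_B ≤ C² (r−t) · sup_{s∈[t,r]} ‖A^n_s − A_s‖_{D→B} · ‖g‖_D. -/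
import Mathlib


/-- comparison identity and estimate for two backward propagators
`U_n` and `U` on `B` with common invariant domain `D` (embedded in `B` via a
norm-nonincreasing injection `ι`), generated by `A^n_t` resp. `A_t`:
`(U_n^{t,r} − U^{t,r}) g = ∫_t^r U_n^{t,s}(A^n_s − A_s)U^{s,r} g ds` and
`‖(U_n^{t,r} − U^{t,r}) g‖_B ≤ C²(r−t) sup_s ‖A^n_s − A_s‖_{D→B} ‖g‖_D`. -/
theorem propagator_comparison_identity_and_estimate
    {D B : Type*} [NormedAddCommGroup D] [NormedSpace ℝ D]
    [NormedAddCommGroup B] [NormedSpace ℝ B] [CompleteSpace B]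
    (ι : D →L[ℝ] B) (hιinj : Function.Injective ι) (hιnorm : ∀ f : D, ‖ι f‖ ≤ ‖f‖)
    (C : ℝ) (hC : 0 ≤ C)
    (Un : ℕ → ℝ → ℝ → B →L[ℝ] B) (U : ℝ → ℝ → B →L[ℝ] B)
    (UnD : ℕ → ℝ → ℝ → D →L[ℝ] D) (UD : ℝ → ℝ → D →L[ℝ] D)
    (An : ℕ → ℝ → D →L[ℝ] B) (A : ℝ → D →L[ℝ] B)
    -- the propagators leave D invariant:
    (hcompatn : ∀ (n : ℕ) (t s : ℝ) (f : D), Un n t s (ι f) = ι (UnD n t s f))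
    (hcompat : ∀ (t s : ℝ) (f : D), U t s (ι f) = ι (UD t s f))
    -- uniform bounds on B and on D:
    (hUnB : ∀ (n : ℕ) (t s : ℝ), t ≤ s → ‖Un n t s‖ ≤ C)
    (hUB : ∀ t s : ℝ, t ≤ s → ‖U t s‖ ≤ C)
    (hUnDbd : ∀ (n : ℕ) (t s : ℝ), t ≤ s → ‖UnD n t s‖ ≤ C)
    (hUDbd : ∀ t s : ℝ, t ≤ s → ‖UD t s‖ ≤ C)
    -- propagator (chain rule) identities:
    (hidn : ∀ (n : ℕ) (t : ℝ), Un n t t = ContinuousLinearMap.id ℝ B)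
    (hid : ∀ t : ℝ, U t t = ContinuousLinearMap.id ℝ B)
    (hchainn : ∀ (n : ℕ) (t s r : ℝ), t ≤ s → s ≤ r →
      (Un n t s).comp (Un n s r) = Un n t r)
    (hchain : ∀ t s r : ℝ, t ≤ s → s ≤ r → (U t s).comp (U s r) = U t r)
    -- generation: forward derivative equations for Un, backward ones for U, on D:
    (hgen_fwd : ∀ (n : ℕ) (t : ℝ) (f : D) (s : ℝ), t ≤ s →
      HasDerivAt (fun u : ℝ => Un n t u (ι f)) (Un n t s (An n s f)) s)
    (hgen_bwd : ∀ (r : ℝ) (f : D) (s : ℝ), s ≤ r →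
      HasDerivAt (fun u : ℝ => U u r (ι f)) (-(A s (UD s r f))) s)
    (n : ℕ) (t r : ℝ) (htr : t ≤ r) (g : D)
    (hint : IntervalIntegrable
      (fun s : ℝ => Un n t s ((An n s - A s) (UD s r g))) MeasureTheory.volume t r) :
    Un n t r (ι g) - U t r (ι g) =
      (∫ s in t..r, Un n t s ((An n s - A s) (UD s r g))) ∧
    ∀ K : ℝ, (∀ s ∈ Set.Icc t r, ‖An n s - A s‖ ≤ K) →
      ‖Un n t r (ι g) - U t r (ι g)‖ ≤ C ^ 2 * (r - t) * K * ‖g‖ := by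
  classical
  -- the target function for FTC
  set ψ : ℝ → B := fun s => Un n t s (U s r (ι g)) with hψdef
  have hψt : ψ t = U t r (ι g) := by simp [hψdef, hidn]
  have hψr : ψ r = Un n t r (ι g) := by simp [hψdef, hid]
  set S : Set B := Set.range ι with hSdef
  -- strong right continuity of s ↦ Un n t s v on the closure of range ι
  have scont : ∀ s₀ : ℝ, t ≤ s₀ → ∀ v ∈ closure S,
      Filter.Tendsto (fun s => Un n t s v) (nhdsWithin s₀ (Set.Ici s₀))
        (nhds (Un n t s₀ v)) := by
    intro s₀ hts₀ v hv
    have step1 : Filter.Tendsto (fun s => Un n s₀ s v) (nhdsWithin s₀ (Set.Ici s₀))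
        (nhds v) := by
      rw [Metric.tendsto_nhdsWithin_nhds]
      intro ε hε
      have hC2 : (0:ℝ) < C + 2 := by linarith
      have hε' : (0:ℝ) < ε / (C + 2) := by positivity
      obtain ⟨b, hbS, hbd⟩ := Metric.mem_closure_iff.mp hv (ε / (C + 2)) hε'
      obtain ⟨f, rfl⟩ := hbS
      have hcont : ContinuousAt (fun u => Un n s₀ u (ι f)) s₀ :=
        (hgen_fwd n s₀ f s₀ le_rfl).continuousAt
      rw [Metric.continuousAt_iff] at hcont
      obtain ⟨δ, hδ, hcont⟩ := hcont (ε / (C + 2)) hε'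
      refine ⟨δ, hδ, ?_⟩
      intro s hs hsd
      have hkey : Un n s₀ s v - v
          = Un n s₀ s (v - ι f) + (Un n s₀ s (ι f) - ι f) + (ι f - v) := by
        rw [map_sub]; abel
      have h1 : ‖Un n s₀ s (v - ι f)‖ ≤ C * (ε / (C + 2)) := by
        refine ((Un n s₀ s).le_opNorm _).trans ?_
        have h1a : ‖Un n s₀ s‖ * ‖v - ι f‖ ≤ C * ‖v - ι f‖ :=
          mul_le_mul_of_nonneg_right (hUnB n s₀ s hs) (norm_nonneg _)
        refine h1a.trans ?_
        have : ‖v - ι f‖ ≤ ε / (C + 2) := by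
          rw [← dist_eq_norm]; exact hbd.le
        exact mul_le_mul_of_nonneg_left this hC
      have h2 : ‖Un n s₀ s (ι f) - ι f‖ < ε / (C + 2) := by
        have := hcont hsd
        simpa [hidn, dist_eq_norm] using this
      have h3 : ‖ι f - v‖ < ε / (C + 2) := by
        rw [norm_sub_rev, ← dist_eq_norm]
        exact hbd
      have hsum : ‖Un n s₀ s v - v‖ ≤ ‖Un n s₀ s (v - ι f)‖
          + ‖Un n s₀ s (ι f) - ι f‖ + ‖ι f - v‖ := by
        rw [hkey]; exact norm_add₃_le
      have hℰ : C * (ε / (C + 2)) + ε / (C + 2) + ε / (C + 2) = ε := by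
        field_simp; ring
      rw [dist_eq_norm]
      calc ‖Un n s₀ s v - v‖
          ≤ ‖Un n s₀ s (v - ι f)‖ + ‖Un n s₀ s (ι f) - ι f‖ + ‖ι f - v‖ := hsum
        _ < C * (ε / (C + 2)) + ε / (C + 2) + ε / (C + 2) := by
            have := h1; have := h2; have := h3; linarith
        _ = ε := hℰ
    have step2 : Filter.Tendsto (fun s => Un n t s₀ (Un n s₀ s v))
        (nhdsWithin s₀ (Set.Ici s₀)) (nhds (Un n t s₀ v)) :=
      ((Un n t s₀).continuous.tendsto v).comp step1
    refine step2.congr' ?_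
    filter_upwards [self_mem_nhdsWithin] with s hs
    rw [← hchainn n t s₀ s hts₀ hs]; rfl
  -- the derivative of s ↦ U s r (ι g) lies in the closure of range ι
  have hvmem : ∀ s₀ : ℝ, s₀ ≤ r → -(A s₀ (UD s₀ r g)) ∈ closure S := by
    intro s₀ hs₀
    have hD : HasDerivAt (fun u : ℝ => U u r (ι g)) (-(A s₀ (UD s₀ r g))) s₀ :=
      hgen_bwd r g s₀ hs₀
    have hslope := hasDerivAt_iff_tendsto_slope.mp hD
    refine mem_closure_of_tendsto hslope ?_
    refine Filter.Eventually.of_forall (fun s => ?_)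
    refine ⟨(s - s₀)⁻¹ • (UD s r g - UD s₀ r g), ?_⟩
    rw [slope_def_module]
    simp [map_smul, map_sub, hcompat]
  -- continuity of ψ on [t, r]
  have hcont : ContinuousOn ψ (Set.Icc t r) := by
    intro s₀ hs₀
    have hts₀ : t ≤ s₀ := hs₀.1
    have hs₀r : s₀ ≤ r := hs₀.2
    have hG : Filter.Tendsto (fun s => Un n t s (U s₀ r (ι g)))
        (nhdsWithin s₀ (Set.Icc t r)) (nhds (Un n t s₀ (U s₀ r (ι g)))) := by
      have := hgen_fwd n t (UD s₀ r g) s₀ hts₀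
      have hc : ContinuousAt (fun u => Un n t u (ι (UD s₀ r g))) s₀ := this.continuousAt
      have hc' : ContinuousAt (fun u => Un n t u (U s₀ r (ι g))) s₀ := by
        simpa [hcompat] using hc
      exact hc'.continuousWithinAt
    have hW : Filter.Tendsto (fun s => U s r (ι g) - U s₀ r (ι g))
        (nhdsWithin s₀ (Set.Icc t r)) (nhds 0) := by
      have hc : ContinuousAt (fun u : ℝ => U u r (ι g)) s₀ :=
        (hgen_bwd r g s₀ hs₀r).continuousAt
      have h0 : Filter.Tendsto (fun s => U s r (ι g) - U s₀ r (ι g))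
          (nhdsWithin s₀ (Set.Icc t r)) (nhds (U s₀ r (ι g) - U s₀ r (ι g))) :=
        Filter.Tendsto.sub (hc.continuousWithinAt (s := Set.Icc t r)) tendsto_const_nhds
      simpa using h0
    have h2 : Filter.Tendsto (fun s => Un n t s (U s r (ι g) - U s₀ r (ι g)))
        (nhdsWithin s₀ (Set.Icc t r)) (nhds 0) := by
      refine squeeze_zero_norm'
        (a := fun s => C * ‖U s r (ι g) - U s₀ r (ι g)‖) ?_ ?_
      · filter_upwards [self_mem_nhdsWithin] with s hs
        refine ((Un n t s).le_opNorm _).trans ?_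
        exact mul_le_mul_of_nonneg_right (hUnB n t s hs.1) (norm_nonneg _)
      · have := (tendsto_const_nhds (x := C)
          (f := nhdsWithin s₀ (Set.Icc t r))).mul hW.norm
        simpa using this
    have hsum := hG.add h2
    have heq : ∀ s : ℝ, Un n t s (U s₀ r (ι g)) + Un n t s (U s r (ι g) - U s₀ r (ι g))
        = ψ s := by
      intro s; rw [map_sub]; simp [hψdef]
    refine ContinuousWithinAt.mono ?_ (le_refl (Set.Icc t r) : Set.Icc t r ⊆ Set.Icc t r)
    unfold ContinuousWithinAt
    have : ψ s₀ = Un n t s₀ (U s₀ r (ι g)) + 0 := by simp [hψdef]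
    rw [this]
    exact hsum.congr heq
  -- right derivative of ψ on (t, r)
  have hderiv : ∀ s₀ ∈ Set.Ioo t r,
      HasDerivWithinAt ψ (Un n t s₀ ((An n s₀ - A s₀) (UD s₀ r g))) (Set.Ioi s₀) s₀ := by
    intro s₀ hs₀
    have hts₀ : t ≤ s₀ := hs₀.1.le
    have hs₀r : s₀ ≤ r := hs₀.2.le
    rw [hasDerivWithinAt_iff_tendsto_slope' (Set.notMem_Ioi.mpr le_rfl)]
    have hmono : nhdsWithin s₀ (Set.Ioi s₀) ≤ nhdsWithin s₀ ({s₀}ᶜ) :=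
      nhdsWithin_mono s₀ (fun x hx => ne_of_gt hx)
    set v : B := -(A s₀ (UD s₀ r g)) with hvdef
    set W : ℝ → B := fun u => U u r (ι g) with hWdef
    have hWd : HasDerivAt W v s₀ := hgen_bwd r g s₀ hs₀r
    have hGd : HasDerivAt (fun u => Un n t u (U s₀ r (ι g)))
        (Un n t s₀ (An n s₀ (UD s₀ r g))) s₀ := by
      have := hgen_fwd n t (UD s₀ r g) s₀ hts₀
      simpa [hcompat] using this
    -- slope decomposition
    have hkey : ∀ s : ℝ, slope ψ s₀ s
        = slope (fun u => Un n t u (U s₀ r (ι g))) s₀ s + Un n t s (slope W s₀ s) := by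
      intro s
      simp only [slope_def_module, map_smul, map_sub, ← smul_add, hψdef, hWdef]
      congr 1
      abel
    have T1 : Filter.Tendsto (slope (fun u => Un n t u (U s₀ r (ι g))) s₀)
        (nhdsWithin s₀ (Set.Ioi s₀)) (nhds (Un n t s₀ (An n s₀ (UD s₀ r g)))) :=
      (hasDerivAt_iff_tendsto_slope.mp hGd).mono_left hmono
    have hσ : Filter.Tendsto (slope W s₀) (nhdsWithin s₀ (Set.Ioi s₀)) (nhds v) :=
      (hasDerivAt_iff_tendsto_slope.mp hWd).mono_left hmono
    have T2a : Filter.Tendsto (fun s => Un n t s (slope W s₀ s - v))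
        (nhdsWithin s₀ (Set.Ioi s₀)) (nhds 0) := by
      refine squeeze_zero_norm'
        (a := fun s => C * ‖slope W s₀ s - v‖) ?_ ?_
      · filter_upwards [self_mem_nhdsWithin] with s hs
        refine ((Un n t s).le_opNorm _).trans ?_
        exact mul_le_mul_of_nonneg_right (hUnB n t s (hts₀.trans (le_of_lt hs)))
          (norm_nonneg _)
      · have hσ0 : Filter.Tendsto (fun s => ‖slope W s₀ s - v‖)
            (nhdsWithin s₀ (Set.Ioi s₀)) (nhds 0) := by
          have := hσ.sub (tendsto_const_nhds (x := v)
            (f := nhdsWithin s₀ (Set.Ioi s₀)))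
          simpa using this.norm
        have := (tendsto_const_nhds (x := C)
          (f := nhdsWithin s₀ (Set.Ioi s₀))).mul hσ0
        simpa using this
    have T2b : Filter.Tendsto (fun s => Un n t s v) (nhdsWithin s₀ (Set.Ioi s₀))
        (nhds (Un n t s₀ v)) :=
      (scont s₀ hts₀ v (hvmem s₀ hs₀r)).mono_left
        (nhdsWithin_mono s₀ Set.Ioi_subset_Ici_self)
    have T2 : Filter.Tendsto (fun s => Un n t s (slope W s₀ s))
        (nhdsWithin s₀ (Set.Ioi s₀)) (nhds (0 + Un n t s₀ v)) := by
      refine (T2a.add T2b).congr (fun s => ?_)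
      rw [map_sub]; abel
    have hlim : Un n t s₀ (An n s₀ (UD s₀ r g)) + (0 + Un n t s₀ v)
        = Un n t s₀ ((An n s₀ - A s₀) (UD s₀ r g)) := by
      simp [hvdef, ContinuousLinearMap.sub_apply, map_sub, map_neg, sub_eq_add_neg]
    rw [← hlim]
    exact (T1.add T2).congr (fun s => (hkey s).symm)
  -- FTC
  have hFTC := intervalIntegral.integral_eq_sub_of_hasDeriv_right_of_le htr hcont hderiv hint
  have hId : Un n t r (ι g) - U t r (ι g)
      = ∫ s in t..r, Un n t s ((An n s - A s) (UD s r g)) := by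
    rw [hFTC, hψr, hψt]
  refine ⟨hId, ?_⟩
  intro K hK
  have hK0 : 0 ≤ K := (norm_nonneg _).trans (hK t ⟨le_rfl, htr⟩)
  have hb : ∀ x ∈ Set.uIoc t r,
      ‖Un n t x ((An n x - A x) (UD x r g))‖ ≤ C * (K * (C * ‖g‖)) := by
    intro x hx
    rw [Set.uIoc_of_le htr] at hx
    have htx : t ≤ x := hx.1.le
    have hxr : x ≤ r := hx.2
    have b1 : ‖Un n t x ((An n x - A x) (UD x r g))‖
        ≤ C * ‖(An n x - A x) (UD x r g)‖ :=
      ContinuousLinearMap.le_of_opNorm_le _ (hUnB n t x htx) _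
    have b2 : ‖(An n x - A x) (UD x r g)‖ ≤ K * ‖UD x r g‖ :=
      ContinuousLinearMap.le_of_opNorm_le _ (hK x ⟨htx, hxr⟩) _
    have b3 : ‖UD x r g‖ ≤ C * ‖g‖ :=
      ContinuousLinearMap.le_of_opNorm_le _ (hUDbd x r hxr) _
    calc ‖Un n t x ((An n x - A x) (UD x r g))‖
        ≤ C * ‖(An n x - A x) (UD x r g)‖ := b1
      _ ≤ C * (K * ‖UD x r g‖) := by
          exact mul_le_mul_of_nonneg_left b2 hC
      _ ≤ C * (K * (C * ‖g‖)) := by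
          refine mul_le_mul_of_nonneg_left ?_ hC
          exact mul_le_mul_of_nonneg_left b3 hK0
  have hest := intervalIntegral.norm_integral_le_of_norm_le_const hb
  rw [hId]
  rw [abs_of_nonneg (sub_nonneg.mpr htr)] at hest
  calc ‖∫ s in t..r, Un n t s ((An n s - A s) (UD s r g))‖
      ≤ C * (K * (C * ‖g‖)) * (r - t) := hest
    _ = C ^ 2 * (r - t) * K * ‖g‖ := by ring
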